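/- Let X be a nonempty set, p a partial metric on X, and {x_n} a sequence in X. Let {x_{n_k}} be a subsequence of {x_n} (given by a strictly increasing map k ↦ n_k) such that the index set {n_1, n_2, …} has natural density 1. Then for every roughness degree r ≥ 0, st-LIM^r x_n ⊆ st-LIM^r x_{n_k}; that is, every rough statistical limit point of {x_n} is a rough statistical limit point of the subsequence {x_{n_k}}. -/

import Mathlib

/-- A partial metric on a set `X`. -/
structure IsPartialMetric {X : Type*} (p : X → X → ℝ) : Prop where
  nonneg : ∀ x y : X, 0 ≤ p x y
  self_le : ∀ x y : X, p x x ≤ p x y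
  eq_iff : ∀ x y : X, x = y ↔ p x x = p x y ∧ p x y = p y y
  symm : ∀ x y : X, p x y = p y x
  triangle : ∀ x y z : X, p x y ≤ p x z + p z y - p z z

open Classical in
/-- `A ⊆ ℕ` has natural density `d`. -/
def HasNatDensity (A : Set ℕ) (d : ℝ) : Prop :=
  Filter.Tendsto
    (fun n : ℕ => (((Finset.range n).filter (fun k => k ∈ A)).card : ℝ) / (n : ℝ))
    Filter.atTop (nhds d)

/-- `l` is a rough statistical limit point of the sequence `x` with roughness degree `r`,
i.e. `l ∈ st-LIM^r x_n`. -/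
def RStatLimit {X : Type*} (p : X → X → ℝ) (x : ℕ → X) (r : ℝ) (l : X) : Prop :=
  ∀ ε : ℝ, 0 < ε → HasNatDensity {n : ℕ | r + ε ≤ |p (x n) l - p l l|} 0

/-- If `x_{n_k}` is a subsequence of `x_n` whose index set has natural density `1`,
then `st-LIM^r x_n ⊆ st-LIM^r x_{n_k}`. -/
theorem rStatLimit_subset_of_subseq
    {X : Type*} [Nonempty X] (p : X → X → ℝ) (hp : IsPartialMetric p)
    (x : ℕ → X) (nk : ℕ → ℕ) (hmono : StrictMono nk)
    (hd : HasNatDensity (Set.range nk) 1)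
    (r : ℝ) (hr : 0 ≤ r) :
    {l : X | RStatLimit p x r l} ⊆ {l : X | RStatLimit p (fun k => x (nk k)) r l} := by
  classical
  intro l hl ε hε
  have hA := hl ε hε
  set A : Set ℕ := {n : ℕ | r + ε ≤ |p (x n) l - p l l|} with hAdef
  have hnk_top : Filter.Tendsto nk Filter.atTop Filter.atTop := hmono.tendsto_atTop
  -- count of range nk below nk n is n
  have hcard : ∀ n, ((Finset.range (nk n)).filter (fun m => m ∈ Set.range nk)).card = n := by
    intro n
    have : (Finset.range (nk n)).filter (fun m => m ∈ Set.range nk)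
        = (Finset.range n).image nk := by
      ext m
      simp only [Finset.mem_filter, Finset.mem_range, Finset.mem_image, Set.mem_range]
      constructor
      · rintro ⟨hm, j, rfl⟩
        exact ⟨j, hmono.lt_iff_lt.mp hm, rfl⟩
      · rintro ⟨j, hj, rfl⟩
        exact ⟨hmono hj, j, rfl⟩
    rw [this, Finset.card_image_of_injective _ hmono.injective, Finset.card_range]
  have h1 : Filter.Tendsto (fun n : ℕ => (n : ℝ) / (nk n : ℝ)) Filter.atTop (nhds 1) := by
    have h := hd.comp hnk_top
    exact h.congr fun n => by simp only [Function.comp_apply, hcard]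
  have h1' : Filter.Tendsto (fun n : ℕ => (nk n : ℝ) / (n : ℝ)) Filter.atTop (nhds 1) := by
    have := (h1.inv₀ one_ne_zero)
    simpa [inv_div] using this
  have hA' : Filter.Tendsto
      (fun n : ℕ => (((Finset.range (nk n)).filter (fun k => k ∈ A)).card : ℝ) / (nk n : ℝ))
      Filter.atTop (nhds 0) := hA.comp hnk_top
  have hprod : Filter.Tendsto
      (fun n : ℕ => (((Finset.range (nk n)).filter (fun k => k ∈ A)).card : ℝ) / (nk n : ℝ)
        * ((nk n : ℝ) / (n : ℝ))) Filter.atTop (nhds 0) := by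
    simpa using hA'.mul h1'
  -- the goal
  show Filter.Tendsto
    (fun n : ℕ => (((Finset.range n).filter
      (fun k => k ∈ {m : ℕ | r + ε ≤ |p (x (nk m)) l - p l l|})).card : ℝ) / (n : ℝ))
    Filter.atTop (nhds 0)
  apply squeeze_zero' (g := fun n : ℕ =>
      (((Finset.range (nk n)).filter (fun k => k ∈ A)).card : ℝ) / (nk n : ℝ)
        * ((nk n : ℝ) / (n : ℝ)))
  · exact Filter.Eventually.of_forall fun n => by positivity
  · filter_upwards [Filter.eventually_ge_atTop 1] with n hn
    have hnk0 : (0:ℝ) < (nk n : ℝ) := by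
      have : 1 ≤ nk n := le_trans hn (hmono.le_apply)
      exact_mod_cast Nat.lt_of_lt_of_le Nat.zero_lt_one this
    have hn0 : (0:ℝ) < (n : ℝ) := by exact_mod_cast hn
    have hcle : ((Finset.range n).filter
        (fun k => k ∈ {m : ℕ | r + ε ≤ |p (x (nk m)) l - p l l|})).card
        ≤ ((Finset.range (nk n)).filter (fun k => k ∈ A)).card := by
      apply Finset.card_le_card_of_injOn nk
      · intro k hk
        simp only [Finset.mem_coe] at hk ⊢
        simp only [Finset.mem_filter, Finset.mem_range, Set.mem_setOf_eq] at hk ⊢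
        exact ⟨hmono hk.1, hk.2⟩
      · exact fun a _ b _ h => hmono.injective h
    rw [div_mul_div_comm, mul_comm ((nk n : ℝ)) ((n:ℝ))]
    rw [mul_div_mul_right _ _ (ne_of_gt hnk0)]
    apply div_le_div_of_nonneg_right ?_ hn0.le
    exact_mod_cast hcle
  · exact hprod
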